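/- Let d > 1 be a real number, n : ℕ, and define u* : Fin (n+1) → ℝ by u* l = (n choose l) · (d−1)^{n−l} · ((d+1)^l − (1−d)^l) / ((2d)^n (d+1)^l). Then for every 0 ≤ k ≤ n: Σ_{l=0}^{n} Q l k · u* l = (if k = 0 then 1 else 0) − (if k = n then ((d−1)/(d+1))^n else 0). -/

import Mathlib

open Matrix Finset
open scoped BigOperators Kronecker ComplexOrder

noncomputable section

/-- The flip (swap) operator on `ℂ^d ⊗ ℂ^d`. -/
def Flip (d : ℕ) : Matrix (Fin d × Fin d) (Fin d × Fin d) ℂ :=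
  Matrix.of fun p q => if p.1 = q.2 ∧ p.2 = q.1 then 1 else 0

/-- Projection onto the symmetric subspace, `Π_s = (1 + F)/2`. -/
def projSym (d : ℕ) : Matrix (Fin d × Fin d) (Fin d × Fin d) ℂ :=
  (2 : ℂ)⁻¹ • (1 + Flip d)

/-- Projection onto the antisymmetric subspace, `Π_a = (1 - F)/2`. -/
def projAsym (d : ℕ) : Matrix (Fin d × Fin d) (Fin d × Fin d) ℂ :=
  (2 : ℂ)⁻¹ • (1 - Flip d)

/-- The symmetric Werner state `σ_d = (2/(d(d+1))) • Π_s`. -/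
def wernerSym (d : ℕ) : Matrix (Fin d × Fin d) (Fin d × Fin d) ℂ :=
  (2 / ((d : ℂ) * ((d : ℂ) + 1))) • projSym d

/-- The antisymmetric Werner state `α_d = (2/(d(d-1))) • Π_a`. -/
def wernerAsym (d : ℕ) : Matrix (Fin d × Fin d) (Fin d × Fin d) ℂ :=
  (2 / ((d : ℂ) * ((d : ℂ) - 1))) • projAsym d

/-- The POVM element `G_d`: diagonal, with `(i,j),(i,j)` entry `1` iff `i ≠ j`. -/
def Gmat (d : ℕ) : Matrix (Fin d × Fin d) (Fin d × Fin d) ℂ :=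
  Matrix.diagonal fun p => if p.1 ≠ p.2 then 1 else 0

/-- `n`-fold tensor power of a matrix on `ℂ^d ⊗ ℂ^d`. -/
def tpow {d : ℕ} (n : ℕ) (X : Matrix (Fin d × Fin d) (Fin d × Fin d) ℂ) :
    Matrix (Fin n → Fin d × Fin d) (Fin n → Fin d × Fin d) ℂ :=
  Matrix.of fun f g => ∏ m, X (f m) (g m)

/-- The twirled single-copy POVM element `M_d = ((d-1)/(d+1)) • Π_s + Π_a`. -/
def MdMat (d : ℕ) : Matrix (Fin d × Fin d) (Fin d × Fin d) ℂ :=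
  (((d : ℂ) - 1) / ((d : ℂ) + 1)) • projSym d + projAsym d

/-- `A_k`: sum over all `k`-element subsets `S` of the copies of the tensor product with
`Π_a` on copies in `S` and `Π_s` elsewhere. -/
def Amat (d n k : ℕ) : Matrix (Fin n → Fin d × Fin d) (Fin n → Fin d × Fin d) ℂ :=
  ∑ S ∈ Finset.powersetCard k (Finset.univ : Finset (Fin n)),
    Matrix.of fun f g => ∏ m, (if m ∈ S then projAsym d else projSym d) (f m) (g m)

/-- Partial transpose on `ℂ^d ⊗ ℂ^d`. -/
def pt {d : ℕ} (X : Matrix (Fin d × Fin d) (Fin d × Fin d) ℂ) :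
    Matrix (Fin d × Fin d) (Fin d × Fin d) ℂ :=
  Matrix.of fun p q => X (p.1, q.2) (q.1, p.2)

/-- The maximally entangled state `Φ_d`. -/
def Phi (d : ℕ) : Matrix (Fin d × Fin d) (Fin d × Fin d) ℂ :=
  Matrix.of fun p q => if p.1 = p.2 ∧ q.1 = q.2 then ((d : ℂ))⁻¹ else 0

/-- `n`-copy partial transpose. -/
def ptN {d n : ℕ} (Y : Matrix (Fin n → Fin d × Fin d) (Fin n → Fin d × Fin d) ℂ) :
    Matrix (Fin n → Fin d × Fin d) (Fin n → Fin d × Fin d) ℂ :=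
  Matrix.of fun f g => Y (fun m => ((f m).1, (g m).2)) (fun m => ((g m).1, (f m).2))

/-- `T_l`: sum over all `l`-element subsets `S` of the copies of the tensor product with
`Φ_d` on copies in `S` and `1 - Φ_d` elsewhere. -/
def Tmat (d n l : ℕ) : Matrix (Fin n → Fin d × Fin d) (Fin n → Fin d × Fin d) ℂ :=
  ∑ S ∈ Finset.powersetCard l (Finset.univ : Finset (Fin n)),
    Matrix.of fun f g => ∏ m, (if m ∈ S then Phi d else (1 - Phi d)) (f m) (g m)

/-- The matrix `Q` of the linear program: `Q l k = Σ_{j=0}^{min(l,k)}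
(n−l choose k−j)(l choose j)(1−d)^j (1+d)^{l−j}`. -/
def Qmat (n : ℕ) (d : ℝ) (l k : ℕ) : ℝ :=
  ∑ j ∈ Finset.range (min l k + 1),
    ((n - l).choose (k - j) : ℝ) * (l.choose j : ℝ) * (1 - d) ^ j * (1 + d) ^ (l - j)

/-- A PPT POVM element on the `n`-copy space: `E`, `1 - E`, `E^Γ`, `(1-E)^Γ` all PSD. -/
def IsPPTPovmElem {d n : ℕ}
    (E : Matrix (Fin n → Fin d × Fin d) (Fin n → Fin d × Fin d) ℂ) : Prop :=
  E.PosSemidef ∧ (1 - E).PosSemidef ∧ (ptN E).PosSemidef ∧ (ptN (1 - E)).PosSemidef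

/-- Error probability for discriminating `σ_d^{⊗n}` (prior `p`) from `α_d^{⊗n}`
(prior `1-p`) with the two-outcome POVM `{E, 1 - E}`. -/
def errProb (d n : ℕ) (p : ℝ)
    (E : Matrix (Fin n → Fin d × Fin d) (Fin n → Fin d × Fin d) ℂ) : ℝ :=
  ((p : ℂ) * (E * tpow n (wernerSym d)).trace
    + (1 - (p : ℂ)) * ((1 - E) * tpow n (wernerAsym d)).trace).re

/-- Separability of a bipartite matrix. -/
def IsSep {I J : Type*} [Fintype I] [Fintype J]
    (W : Matrix (I × J) (I × J) ℂ) : Prop :=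
  ∃ (m : ℕ) (A : Fin m → Matrix I I ℂ) (B : Fin m → Matrix J J ℂ),
    (∀ i, (A i).PosSemidef) ∧ (∀ i, (B i).PosSemidef) ∧ W = ∑ i, A i ⊗ₖ B i

/-- Trace norm `‖X‖₁ = Tr √(Xᴴ X)`. -/
def traceNorm {ι : Type*} [Fintype ι] [DecidableEq ι] (X : Matrix ι ι ℂ) : ℝ :=
  ((Matrix.posSemidef_conjTranspose_mul_self X).1.eigenvectorUnitary.1 *
      Matrix.diagonal ((fun x : ℝ => (x : ℂ)) ∘ Real.sqrt ∘ (Matrix.posSemidef_conjTranspose_mul_self X).1.eigenvalues) *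
      (star (Matrix.posSemidef_conjTranspose_mul_self X).1.eigenvectorUnitary : Matrix ι ι ℂ)).trace.re

/-- Frobenius (Hilbert–Schmidt) norm `‖X‖₂ = √(Tr (Xᴴ X))`. -/
def frobNorm {ι : Type*} [Fintype ι] (X : Matrix ι ι ℂ) : ℝ :=
  Real.sqrt ((Xᴴ * X).trace.re)
open Polynomial in
private lemma coeff_linear_pow (a b : ℝ) (hb : b ≠ 0) (l j : ℕ) :
    ((C a + C b * X : Polynomial ℝ) ^ l).coeff j
      = (l.choose j : ℝ) * b ^ j * a ^ (l - j) := by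
  have h : (C a + C b * X : Polynomial ℝ) = C b * (X + C (a / b)) := by
    rw [mul_add, ← C_mul, mul_div_cancel₀ _ hb]; ring
  rw [h, mul_pow, ← C_pow, coeff_C_mul, coeff_X_add_C_pow]
  rcases le_or_gt j l with hjl | hjl
  · have h1 : b ^ l = b ^ j * b ^ (l - j) := by
      rw [← pow_add, Nat.add_sub_cancel' hjl]
    rw [h1, div_pow]
    have h2 : (b : ℝ) ^ (l - j) ≠ 0 := pow_ne_zero _ hb
    field_simp
  · rw [Nat.choose_eq_zero_of_lt hjl]
    simp

open Polynomial in
private lemma Qmat_eq_coeff (d : ℝ) (hd : 1 < d) (n l k : ℕ) :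
    Qmat n d l k
      = (((1 + X) ^ (n - l) * (C (1 + d) + C (1 - d) * X) ^ l : Polynomial ℝ)).coeff k := by
  have hb : (1 : ℝ) - d ≠ 0 := by linarith
  rw [mul_comm, coeff_mul, Finset.Nat.sum_antidiagonal_eq_sum_range_succ_mk, Qmat]
  rw [Finset.sum_subset (Finset.range_subset_range.2 (by omega : min l k + 1 ≤ k + 1))
    (by
      intro j hj hj'
      simp only [Finset.mem_range] at hj hj'
      rw [Nat.choose_eq_zero_of_lt (show l < j by omega)]
      simp)]
  refine Finset.sum_congr rfl fun j _ => ?_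
  rw [coeff_linear_pow _ _ hb, coeff_one_add_X_pow]
  ring

open Polynomial in
open Polynomial in
private lemma key_poly (d : ℝ) (hd : 1 < d) (n : ℕ) :
    ∑ l ∈ Finset.range (n + 1),
      C ((n.choose l : ℝ) * (d - 1) ^ (n - l) * ((d + 1) ^ l - (1 - d) ^ l)
          / ((2 * d) ^ n * (d + 1) ^ l))
        * ((1 + X) ^ (n - l) * (C (1 + d) + C (1 - d) * X) ^ l)
      = C 1 - C (((d - 1) / (d + 1)) ^ n) * X ^ n := by
  have hd1 : d + 1 ≠ 0 := by linarith
  have h2d : (2 : ℝ) * d ≠ 0 := by positivity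
  have h2dn : ((2 : ℝ) * d) ^ n ≠ 0 := pow_ne_zero _ h2d
  set A : Polynomial ℝ := C (d - 1) * (1 + X) with hA
  set B : Polynomial ℝ := C (1 + d) + C (1 - d) * X with hB
  set B' : Polynomial ℝ := C ((1 - d) / (1 + d)) * B with hB'
  have hBA : B + A = C (2 * d) := by
    have h0 : C ((1 : ℝ) - d) + C (d - 1) = 0 := by
      rw [← C_add, show (1 : ℝ) - d + (d - 1) = 0 by ring, C_0]
    have h1 : C ((1 : ℝ) + d) + C (d - 1) = C (2 * d) := by
      rw [← C_add, show (1 : ℝ) + d + (d - 1) = 2 * d by ring]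
    rw [hB, hA]
    linear_combination X * h0 + h1
  have hB'A : B' + A = C (2 * d * (d - 1) / (1 + d)) * X := by
    have h0 : C ((1 - d) / (1 + d)) * C ((1 : ℝ) + d) + C (d - 1) = 0 := by
      rw [← C_mul, ← C_add, show ((1 - d) / (1 + d) * (1 + d) + (d - 1)) = 0 by
        field_simp; ring, C_0]
    have h1 : C ((1 - d) / (1 + d)) * C ((1 : ℝ) - d) + C (d - 1)
        = C (2 * d * (d - 1) / (1 + d)) := by
      rw [← C_mul, ← C_add]
      congr 1
      field_simp
      ring
    rw [hB', hB, hA]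
    linear_combination h0 + X * h1
  have hterm : ∀ l ∈ Finset.range (n + 1),
      C ((n.choose l : ℝ) * (d - 1) ^ (n - l) * ((d + 1) ^ l - (1 - d) ^ l)
          / ((2 * d) ^ n * (d + 1) ^ l)) * ((1 + X) ^ (n - l) * B ^ l)
      = C (((2 * d) ^ n)⁻¹) *
          (B ^ l * A ^ (n - l) * (n.choose l : Polynomial ℝ)
            - B' ^ l * A ^ (n - l) * (n.choose l : Polynomial ℝ)) := by
    intro l _
    have hApow : A ^ (n - l) = C ((d - 1) ^ (n - l)) * (1 + X) ^ (n - l) := by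
      rw [hA, mul_pow, C_pow]
    have hB'pow : B' ^ l = C (((1 - d) / (1 + d)) ^ l) * B ^ l := by
      rw [hB', mul_pow, C_pow]
    have hch : (n.choose l : Polynomial ℝ) = C ((n.choose l : ℝ)) := by
      rw [C_eq_natCast]
    have hscal : (n.choose l : ℝ) * (d - 1) ^ (n - l) * ((d + 1) ^ l - (1 - d) ^ l)
          / ((2 * d) ^ n * (d + 1) ^ l)
        = ((2 * d) ^ n)⁻¹ * (n.choose l : ℝ) * (d - 1) ^ (n - l)
          - ((2 * d) ^ n)⁻¹ * (n.choose l : ℝ) * (d - 1) ^ (n - l)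
            * ((1 - d) / (1 + d)) ^ l := by
      rw [div_pow]
      field_simp
      ring
    rw [hApow, hB'pow, hch, hscal, C_sub, C_mul, C_mul, C_mul, C_mul, C_mul]
    ring
  have e1 : (C (2 * d) : Polynomial ℝ) ^ n = C ((2 * d) ^ n) := (C_pow).symm
  have e2 : (C (2 * d * (d - 1) / (1 + d)) * X : Polynomial ℝ) ^ n
      = C ((2 * d * (d - 1) / (1 + d)) ^ n) * X ^ n := by
    rw [mul_pow, C_pow]
  rw [Finset.sum_congr rfl hterm, ← Finset.mul_sum, Finset.sum_sub_distrib,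
    ← add_pow, ← add_pow, hBA, hB'A, e1, e2, mul_sub, ← C_mul,
    ← mul_assoc, ← C_mul, inv_mul_cancel₀ h2dn,
    show ((2 * d) ^ n)⁻¹ * (2 * d * (d - 1) / (1 + d)) ^ n = ((d - 1) / (d + 1)) ^ n by
      rw [inv_mul_eq_div, ← div_pow]
      congr 1
      field_simp
      ring]

/-- `Σ_l Q l k · u*_l = δ_{0k} − δ_{nk} ((d−1)/(d+1))^n`. -/
theorem Qmat_dual_action (d : ℝ) (hd : 1 < d) (n : ℕ) (u : Fin (n + 1) → ℝ)
    (hu : ∀ l : Fin (n + 1),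
      u l = (n.choose (l : ℕ) : ℝ) * (d - 1) ^ (n - (l : ℕ))
              * ((d + 1) ^ (l : ℕ) - (1 - d) ^ (l : ℕ))
              / ((2 * d) ^ n * (d + 1) ^ (l : ℕ)))
    (k : ℕ) (hk : k ≤ n) :
    ∑ l : Fin (n + 1), Qmat n d (l : ℕ) k * u l
      = (if k = 0 then 1 else 0) - (if k = n then ((d - 1) / (d + 1)) ^ n else 0) := by
  have hkey := congrArg (fun p => Polynomial.coeff p k) (key_poly d hd n)
  simp only [Polynomial.finset_sum_coeff, Polynomial.coeff_C_mul, Polynomial.coeff_sub,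
    Polynomial.coeff_C, Polynomial.coeff_X_pow] at hkey
  simp only [hu]
  rw [Fin.sum_univ_eq_sum_range (fun l => Qmat n d l k *
    ((n.choose l : ℝ) * (d - 1) ^ (n - l) * ((d + 1) ^ l - (1 - d) ^ l)
      / ((2 * d) ^ n * (d + 1) ^ l)))]
  rw [Finset.sum_congr rfl (fun l _ => by
    rw [Qmat_eq_coeff d hd n l k]; ring :
    ∀ l ∈ Finset.range (n + 1), Qmat n d l k *
      ((n.choose l : ℝ) * (d - 1) ^ (n - l) * ((d + 1) ^ l - (1 - d) ^ l)
        / ((2 * d) ^ n * (d + 1) ^ l))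
      = ((n.choose l : ℝ) * (d - 1) ^ (n - l) * ((d + 1) ^ l - (1 - d) ^ l)
          / ((2 * d) ^ n * (d + 1) ^ l)) *
        (((1 + Polynomial.X) ^ (n - l)
          * (Polynomial.C (1 + d) + Polynomial.C (1 - d) * Polynomial.X) ^ l
            : Polynomial ℝ)).coeff k)]
  rw [hkey]
  split_ifs <;> ring

end
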